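/- Fix a positive integer d, x ∈ (0,1) and k ∈ (0,1). For ε ∈ (0,1) set t₁(ε) = xε/(1 − x(1−ε)), N₁(k) = 1 − k(1−x), N₂(ε, k) = (1−ε)x + kεx and ψ_ε(k) = t₁(ε)·N₁(k)^{d+1} + (1 − t₁(ε))·N₂(ε, k)^{d+1}. Then the function ε ↦ (ψ_ε(0) − ψ_ε(1)) / (ψ_ε(0) − ψ_ε(k)) is monotonically increasing on (0,1). -/

import Mathlib

set_option maxHeartbeats 1000000

noncomputable def Fder (d : ℕ) (x : ℝ) (s : ℝ) : ℝ :=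
  (1 - x^(d+1)) - (1-x)*x^d*(((d:ℝ)+1)*(1-s)^d)

noncomputable def Gder (d : ℕ) (x k : ℝ) (s : ℝ) : ℝ :=
  (1 - (1-k*(1-x))^(d+1)) - (1-x)*x^d*(((d:ℝ)+1)*(1-s)^d - ((d:ℝ)+1)*(1-k)*(1-(1-k)*s)^d)

noncomputable def fpol (d : ℕ) (x : ℝ) (e : ℝ) : ℝ :=
  (1 - x^(d+1))*e - (1-x)*x^d*(1 - (1-e)^(d+1))

noncomputable def gpol (d : ℕ) (x k : ℝ) (e : ℝ) : ℝ :=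
  (1 - (1-k*(1-x))^(d+1))*e - (1-x)*x^d*((1-(1-k)*e)^(d+1) - (1-e)^(d+1))


lemma geom_lb (n : ℕ) (t : ℝ) (h0 : 0 ≤ t) (h1 : t ≤ 1) :
    ((n:ℝ)+1) * t^n * (1-t) ≤ 1 - t^(n+1) := by
  have h2 : ((n:ℝ)+1) * t^n ≤ ∑ i ∈ Finset.range (n+1), t^i := by
    have := Finset.card_nsmul_le_sum (Finset.range (n+1)) (fun i => t^i) (t^n)
      (fun i hi => pow_le_pow_of_le_one h0 h1 (by
        simp only [Finset.mem_range] at hi; omega))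
    simpa [nsmul_eq_mul] using this
  calc ((n:ℝ)+1) * t^n * (1-t) ≤ (∑ i ∈ Finset.range (n+1), t^i) * (1-t) :=
        mul_le_mul_of_nonneg_right h2 (by linarith)
    _ = 1 - t^(n+1) := by linear_combination (-1:ℝ) * geom_sum_mul t (n+1)

lemma pow_sub_pow_le (n : ℕ) (s t : ℝ) (hs : 0 ≤ s) (hst : s ≤ t) :
    t^(n+1) - s^(n+1) ≤ ((n:ℝ)+1) * (t-s) * t^n := by
  have ht : 0 ≤ t := hs.trans hst
  have h2 : (∑ i ∈ Finset.range (n+1), t^i * s^(n-i)) ≤ ((n:ℝ)+1) * t^n := by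
    have := Finset.sum_le_card_nsmul (Finset.range (n+1)) (fun i => t^i * s^(n-i)) (t^n)
      (fun i hi => by
        simp only [Finset.mem_range] at hi
        calc t^i * s^(n-i) ≤ t^i * t^(n-i) :=
              mul_le_mul_of_nonneg_left (pow_le_pow_left₀ hs hst _) (pow_nonneg ht _)
          _ = t^n := by rw [← pow_add]; congr 1; omega)
    simpa [nsmul_eq_mul] using this
  have h3 := geom_sum₂_mul t s (n+1)
  -- h3 : (∑ i in range (n+1), t^i * s^(n+1-1-i)) * (t - s) = t^(n+1) - s^(n+1)
  have h4 : (∑ i ∈ Finset.range (n+1), t^i * s^(n-i)) * (t-s) = t^(n+1) - s^(n+1) := by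
    simpa using h3
  calc t^(n+1) - s^(n+1) = (∑ i ∈ Finset.range (n+1), t^i * s^(n-i)) * (t-s) := h4.symm
    _ ≤ (((n:ℝ)+1) * t^n) * (t-s) := mul_le_mul_of_nonneg_right h2 (by linarith)
    _ = ((n:ℝ)+1) * (t-s) * t^n := by ring

lemma pow_convex (j : ℕ) (x β : ℝ) (hx0 : 0 ≤ x) (hx1 : x ≤ 1) (hb0 : 0 ≤ β) (hb1 : β ≤ 1) :
    (β + (1-β)*x)^j ≤ β + (1-β)*x^j := by
  induction j with
  | zero => simp
  | succ j ih =>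
    have hN0 : 0 ≤ β + (1-β)*x := by nlinarith
    have hxj : x^j ≤ 1 := pow_le_one₀ hx0 hx1
    have hxj0 : 0 ≤ x^j := pow_nonneg hx0 j
    have hid : β + (1-β)*x^(j+1) - (β + (1-β)*x^j)*(β + (1-β)*x)
        = β*(1-β)*((1-x)*(1-x^j)) := by ring
    have h2 : (β + (1-β)*x)^(j+1) ≤ (β + (1-β)*x^j)*(β + (1-β)*x) := by
      rw [pow_succ]
      exact mul_le_mul_of_nonneg_right ih hN0
    nlinarith [mul_nonneg (mul_nonneg hb0 (by linarith : (0:ℝ) ≤ 1-β))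
      (mul_nonneg (by linarith : (0:ℝ) ≤ 1-x) (by linarith : (0:ℝ) ≤ 1-x^j))]

lemma tsharp (n : ℕ) (β p q : ℝ) (hb0 : 0 ≤ β) (hb1 : β ≤ 1)
    (hq : 0 ≤ q) (hqp : q ≤ p) (hp : p ≤ 1) :
    p^n - q^n ≤ (1-β*(1-p))^n - (1-β*(1-q))^n
      + p^n*(1-β*(1-q))^n - q^n*(1-β*(1-p))^n := by
  obtain rfl | hlt := hqp.eq_or_lt
  · exact le_of_eq (by ring)
  cases n with
  | zero => norm_num
  | succ j =>
  have hp0 : 0 < p := lt_of_le_of_lt hq hlt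
  have hq1 : q ≤ 1 := hqp.trans hp
  set G : ℝ → ℝ := fun t => (1-β*(1-t))^(j+1) - (1-β*(1-q))^(j+1)
      + t^(j+1)*(1-β*(1-q))^(j+1) - q^(j+1)*(1-β*(1-t))^(j+1) - t^(j+1) + q^(j+1)
      with hGdef
  have hG : ∀ t : ℝ, HasDerivAt G
      (((j:ℝ)+1) * (β*(1-β*(1-t))^j*(1-q^(j+1)) - t^j*(1-(1-β*(1-q))^(j+1)))) t := by
    intro t
    have hP' : HasDerivAt (fun t : ℝ => 1-β*(1-t)) β t := by
      simpa using (((hasDerivAt_id t).const_sub 1).const_mul β).const_sub 1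
    have hA := hP'.fun_pow (j+1)
    have hB := (hasDerivAt_pow (j+1) t).mul_const ((1-β*(1-q))^(j+1))
    have hCc := (hP'.fun_pow (j+1)).const_mul (q^(j+1))
    have hD := hasDerivAt_pow (j+1) t
    have := ((((hA.sub_const ((1-β*(1-q))^(j+1))).add hB).sub hCc).sub hD).add_const (q^(j+1))
    refine this.congr_deriv ?_
    simp only [Nat.add_sub_cancel]
    push_cast
    ring
  have hGq : G q = 0 := by simp only [hGdef]; ring
  have hG1 : G 1 = 0 := by simp only [hGdef]; norm_num
  have hgoal : 0 ≤ G p → p^(j+1) - q^(j+1) ≤ (1-β*(1-p))^(j+1) - (1-β*(1-q))^(j+1)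
      + p^(j+1)*(1-β*(1-q))^(j+1) - q^(j+1)*(1-β*(1-p))^(j+1) := by
    intro h; simp only [hGdef] at h; linarith
  apply hgoal
  have hcont : Continuous G := by
    simp only [hGdef]; fun_prop
  have hqj1 : q^(j+1) ≤ 1 := pow_le_one₀ hq hq1
  have hPp0 : 0 ≤ 1-β*(1-p) := by nlinarith
  by_cases hBp : 0 ≤ β*(1-β*(1-p))^j*(1-q^(j+1)) - p^j*(1-(1-β*(1-q))^(j+1))
  · -- G monotone on [q,p]
    have hmono : MonotoneOn G (Set.Icc q p) := by
      apply monotoneOn_of_deriv_nonneg (convex_Icc q p) hcont.continuousOn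
      · intro t ht; exact (hG t).differentiableAt.differentiableWithinAt
      · intro t ht
        rw [interior_Icc] at ht
        rw [(hG t).deriv]
        have h0t : 0 ≤ t := le_trans hq ht.1.le
        have htp : t ≤ p := ht.2.le
        have ht1 : t ≤ 1 := htp.trans hp
        have hPt0 : 0 ≤ 1-β*(1-t) := by nlinarith
        have hcross : (1-β*(1-p))*t ≤ (1-β*(1-t))*p := by nlinarith
        have hcp : ((1-β*(1-p))*t)^j ≤ ((1-β*(1-t))*p)^j :=
          pow_le_pow_left₀ (mul_nonneg hPp0 h0t) hcross j
        rw [mul_pow, mul_pow] at hcp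
        have h1 : β*(1-q^(j+1)) * ((1-β*(1-p))^j * t^j)
            ≤ β*(1-q^(j+1)) * ((1-β*(1-t))^j * p^j) :=
          mul_le_mul_of_nonneg_left hcp (by nlinarith)
        have h2 : (1-(1-β*(1-q))^(j+1)) * p^j * t^j
            ≤ β*(1-q^(j+1)) * ((1-β*(1-p))^j * t^j) := by
          have := mul_le_mul_of_nonneg_right hBp (pow_nonneg h0t j)
          nlinarith [pow_nonneg h0t j]
        have h3 : 0 * p^j ≤ (β*(1-β*(1-t))^j*(1-q^(j+1)) - t^j*(1-(1-β*(1-q))^(j+1))) * p^j := by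
          nlinarith
        have h4 := le_of_mul_le_mul_right h3 (pow_pos hp0 j)
        have : (0:ℝ) ≤ (j:ℝ)+1 := by positivity
        exact mul_nonneg this h4
    have h0q : G q ≤ G p := hmono (Set.mem_Icc.2 ⟨le_rfl, hqp⟩) (Set.mem_Icc.2 ⟨hqp, le_rfl⟩) hqp
    linarith [hGq ▸ h0q]
  · -- G antitone on [p,1]
    push_neg at hBp
    have hanti : AntitoneOn G (Set.Icc p 1) := by
      apply antitoneOn_of_deriv_nonpos (convex_Icc p 1) hcont.continuousOn
      · intro t ht; exact (hG t).differentiableAt.differentiableWithinAt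
      · intro t ht
        rw [interior_Icc] at ht
        rw [(hG t).deriv]
        have h0t : 0 ≤ t := le_trans hp0.le ht.1.le
        have hpt : p ≤ t := ht.1.le
        have ht1 : t ≤ 1 := ht.2.le
        have hPt0 : 0 ≤ 1-β*(1-t) := by nlinarith
        have hcross : (1-β*(1-t))*p ≤ (1-β*(1-p))*t := by nlinarith
        have hcp : ((1-β*(1-t))*p)^j ≤ ((1-β*(1-p))*t)^j :=
          pow_le_pow_left₀ (mul_nonneg hPt0 hp0.le) hcross j
        rw [mul_pow, mul_pow] at hcp
        have h1 : β*(1-q^(j+1)) * ((1-β*(1-t))^j * p^j)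
            ≤ β*(1-q^(j+1)) * ((1-β*(1-p))^j * t^j) :=
          mul_le_mul_of_nonneg_left hcp (by nlinarith)
        have h2 : β*(1-q^(j+1)) * ((1-β*(1-p))^j * t^j)
            ≤ (1-(1-β*(1-q))^(j+1)) * p^j * t^j := by
          have := mul_le_mul_of_nonneg_right hBp.le (pow_nonneg h0t j)
          nlinarith [pow_nonneg h0t j]
        have h3 : (β*(1-β*(1-t))^j*(1-q^(j+1)) - t^j*(1-(1-β*(1-q))^(j+1))) * p^j ≤ 0 * p^j := by
          nlinarith
        have h5 := le_of_mul_le_mul_right h3 (pow_pos hp0 j)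
        have : (0:ℝ) ≤ (j:ℝ)+1 := by positivity
        exact mul_nonpos_of_nonneg_of_nonpos this h5
    have h0q : G 1 ≤ G p := hanti (Set.mem_Icc.2 ⟨le_rfl, hp⟩) (Set.mem_Icc.2 ⟨hp, le_rfl⟩) hp
    linarith [hG1 ▸ h0q]

lemma keyfinal (n : ℕ) (x β p q : ℝ) (hx : 0 < x) (hx1 : x < 1)
    (hb : 0 < β) (hb1 : β < 1) (hq : 0 ≤ q) (hqp : q ≤ p) (hp : p ≤ 1) :
    ((β + (1-β)*x)^(n+1) - x^(n+1)) * (p^n - q^n)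
      ≤ (1 - x^(n+1)) * β * ((1-β*(1-p))^n - (1-β*(1-q))^n)
        + ((n:ℝ)+1) * (1-x) * x^n * β * (p^n*(1-β*(1-q))^n - q^n*(1-β*(1-p))^n) := by
  have hp0 : 0 ≤ p := hq.trans hqp
  have hq1 : q ≤ 1 := hqp.trans hp
  have hP0 : 0 ≤ 1-β*(1-p) := by nlinarith
  have hQ0 : 0 ≤ 1-β*(1-q) := by nlinarith
  have hQP : 1-β*(1-q) ≤ 1-β*(1-p) := by nlinarith
  have hpP : p ≤ 1-β*(1-p) := by nlinarith
  have hqQ : q ≤ 1-β*(1-q) := by nlinarith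
  have hN0 : (0:ℝ) ≤ β + (1-β)*x := by nlinarith
  -- geometric sum names
  have hc₁ : 1 - x^(n+1) = (1-x) * (∑ i ∈ Finset.range (n+1), x^i) := by
    linear_combination geom_sum_mul x (n+1)
  have hCeq : (β + (1-β)*x)^(n+1) - x^(n+1)
      = β*(1-x) * (∑ i ∈ Finset.range (n+1), (β + (1-β)*x)^i * x^(n-i)) := by
    have h := geom_sum₂_mul (β + (1-β)*x) x (n+1)
    have h2 : (∑ i ∈ Finset.range (n+1), (β + (1-β)*x)^i * x^(n+1-1-i))
        = ∑ i ∈ Finset.range (n+1), (β + (1-β)*x)^i * x^(n-i) := by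
      apply Finset.sum_congr rfl; intro i hi; norm_num
    rw [h2] at h
    rw [← h]; ring
  -- M ≤ β Sx + (n+1)(1-β)x^n
  have hM : (∑ i ∈ Finset.range (n+1), (β + (1-β)*x)^i * x^(n-i))
      ≤ β * (∑ i ∈ Finset.range (n+1), x^i) + ((n:ℝ)+1)*(1-β)*x^n := by
    have step1 : (∑ i ∈ Finset.range (n+1), (β + (1-β)*x)^i * x^(n-i))
        ≤ ∑ i ∈ Finset.range (n+1), (β * x^(n-i) + (1-β)*x^n) := by
      apply Finset.sum_le_sum
      intro i hi
      simp only [Finset.mem_range] at hi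
      have h1 : (β + (1-β)*x)^i * x^(n-i) ≤ (β + (1-β)*x^i) * x^(n-i) :=
        mul_le_mul_of_nonneg_right
          (pow_convex i x β hx.le hx1.le hb.le hb1.le) (pow_nonneg hx.le _)
      have h2 : x^i * x^(n-i) = x^n := by rw [← pow_add]; congr 1; omega
      calc (β + (1-β)*x)^i * x^(n-i) ≤ (β + (1-β)*x^i) * x^(n-i) := h1
        _ = β * x^(n-i) + (1-β)*(x^i * x^(n-i)) := by ring
        _ = β * x^(n-i) + (1-β)*x^n := by rw [h2]
    have step2 : (∑ i ∈ Finset.range (n+1), (β * x^(n-i) + (1-β)*x^n))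
        = β * (∑ i ∈ Finset.range (n+1), x^i) + ((n:ℝ)+1)*(1-β)*x^n := by
      rw [Finset.sum_add_distrib, ← Finset.mul_sum, Finset.sum_const, Finset.card_range]
      have hrefl : (∑ i ∈ Finset.range (n+1), x^(n-i)) = ∑ i ∈ Finset.range (n+1), x^i := by
        have := Finset.sum_range_reflect (fun i => x^i) (n+1)
        simpa using this
      rw [hrefl]
      push_cast
      ring
    linarith
  -- Sx bounds
  have hSx0 : (0:ℝ) ≤ ∑ i ∈ Finset.range (n+1), x^i :=
    Finset.sum_nonneg (fun i _ => pow_nonneg hx.le i)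
  have hSxge : ((n:ℝ)+1)*x^n ≤ ∑ i ∈ Finset.range (n+1), x^i := by
    have := Finset.card_nsmul_le_sum (Finset.range (n+1)) (fun i => x^i) (x^n)
      (fun i hi => pow_le_pow_of_le_one hx.le hx1.le (by
        simp only [Finset.mem_range] at hi; omega))
    simpa [nsmul_eq_mul] using this
  -- P^n - Q^n ≥ β (p^n - q^n)
  have hpq : 0 ≤ p^n - q^n := by
    have := pow_le_pow_left₀ hq hqp n; linarith
  have hPQ : β*(p^n - q^n) ≤ (1-β*(1-p))^n - (1-β*(1-q))^n := by
    have h1 := geom_sum₂_mul (1-β*(1-p)) (1-β*(1-q)) n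
    have h2 := geom_sum₂_mul p q n
    have hterm : (∑ i ∈ Finset.range n, p^i * q^(n-1-i))
        ≤ ∑ i ∈ Finset.range n, (1-β*(1-p))^i * (1-β*(1-q))^(n-1-i) := by
      apply Finset.sum_le_sum
      intro i hi
      exact mul_le_mul (pow_le_pow_left₀ hp0 hpP i) (pow_le_pow_left₀ hq hqQ _)
        (pow_nonneg hq _) (pow_nonneg hP0 _)
    have hd : (1-β*(1-p)) - (1-β*(1-q)) = β*(p-q) := by ring
    have hpq' : 0 ≤ p - q := by linarith
    calc β*(p^n - q^n) = (∑ i ∈ Finset.range n, p^i * q^(n-1-i)) * (β*(p-q)) := by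
          rw [← h2]; ring
      _ ≤ (∑ i ∈ Finset.range n, (1-β*(1-p))^i * (1-β*(1-q))^(n-1-i)) * (β*(p-q)) :=
          mul_le_mul_of_nonneg_right hterm (by positivity)
      _ = (1-β*(1-p))^n - (1-β*(1-q))^n := by rw [← h1, hd]
  have hts := tsharp n β p q hb.le hb1.le hq hqp hp
  -- assemble
  have hbx : (0:ℝ) ≤ β*(1-x) := by nlinarith
  -- L and R
  have hLR : ((n:ℝ)+1)*x^n * ((1-β)*(p^n-q^n) - (p^n*(1-β*(1-q))^n - q^n*(1-β*(1-p))^n))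
      ≤ (∑ i ∈ Finset.range (n+1), x^i) * (((1-β*(1-p))^n - (1-β*(1-q))^n) - β*(p^n-q^n)) := by
    set L : ℝ := ((1-β*(1-p))^n - (1-β*(1-q))^n) - β*(p^n-q^n) with hL
    set R : ℝ := (1-β)*(p^n-q^n) - (p^n*(1-β*(1-q))^n - q^n*(1-β*(1-p))^n) with hR
    have hL0 : 0 ≤ L := by rw [hL]; linarith
    have hRL : R ≤ L := by rw [hL, hR]; linarith
    rcases le_or_gt R 0 with h | h
    · have : ((n:ℝ)+1)*x^n * R ≤ 0 := mul_nonpos_of_nonneg_of_nonpos (by positivity) h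
      have h2 : 0 ≤ (∑ i ∈ Finset.range (n+1), x^i) * L := mul_nonneg hSx0 hL0
      linarith
    · calc ((n:ℝ)+1)*x^n * R ≤ (∑ i ∈ Finset.range (n+1), x^i) * R :=
            mul_le_mul_of_nonneg_right hSxge h.le
        _ ≤ (∑ i ∈ Finset.range (n+1), x^i) * L :=
            mul_le_mul_of_nonneg_left hRL hSx0
  have hMstep : ((β + (1-β)*x)^(n+1) - x^(n+1)) * (p^n - q^n)
      ≤ β*(1-x) * ((β * (∑ i ∈ Finset.range (n+1), x^i) + ((n:ℝ)+1)*(1-β)*x^n) * (p^n - q^n)) := by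
    rw [hCeq]
    have := mul_le_mul_of_nonneg_right hM hpq
    calc β*(1-x) * (∑ i ∈ Finset.range (n+1), (β + (1-β)*x)^i * x^(n-i)) * (p^n - q^n)
        = β*(1-x) * ((∑ i ∈ Finset.range (n+1), (β + (1-β)*x)^i * x^(n-i)) * (p^n - q^n)) := by ring
      _ ≤ β*(1-x) * ((β * (∑ i ∈ Finset.range (n+1), x^i) + ((n:ℝ)+1)*(1-β)*x^n) * (p^n - q^n)) :=
          mul_le_mul_of_nonneg_left this hbx
  have hfinal := mul_le_mul_of_nonneg_left hLR hbx
  calc ((β + (1-β)*x)^(n+1) - x^(n+1)) * (p^n - q^n)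
      ≤ β*(1-x) * ((β * (∑ i ∈ Finset.range (n+1), x^i) + ((n:ℝ)+1)*(1-β)*x^n) * (p^n - q^n)) := hMstep
    _ ≤ (1 - x^(n+1)) * β * ((1-β*(1-p))^n - (1-β*(1-q))^n)
        + ((n:ℝ)+1) * (1-x) * x^n * β * (p^n*(1-β*(1-q))^n - q^n*(1-β*(1-p))^n) := by
        rw [hc₁]
        nlinarith [hfinal]

lemma integrand_nonneg (d : ℕ) (x k s ε : ℝ) (hx : 0 < x) (hx1 : x < 1)
    (hk : 0 < k) (hk1 : k < 1) (hs : 0 ≤ s) (hsε : s ≤ ε) (hε : ε ≤ 1) :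
    0 ≤ Fder d x ε * Gder d x k s - Fder d x s * Gder d x k ε := by
  have hb : (0:ℝ) < 1-k := by linarith
  have hb1 : (1:ℝ)-k < 1 := by linarith
  have hq0 : (0:ℝ) ≤ 1-ε := by linarith
  have hqp : (1:ℝ)-ε ≤ 1-s := by linarith
  have hp1 : (1:ℝ)-s ≤ 1 := by linarith
  have hkey := keyfinal d x (1-k) (1-s) (1-ε) hx hx1 hb hb1 hq0 hqp hp1
  rw [show (1:ℝ)-(1-k)*(1-(1-s)) = 1-(1-k)*s from by ring,
      show (1:ℝ)-(1-k)*(1-(1-ε)) = 1-(1-k)*ε from by ring] at hkey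
  have hma : (0:ℝ) ≤ ((d:ℝ)+1)*(1-x)*x^d :=
    mul_nonneg (mul_nonneg (by positivity) (by linarith)) (by positivity)
  have h2 : 0 ≤ ((d:ℝ)+1)*(1-x)*x^d *
      (((1 - x^(d+1)) * (1-k) * ((1-(1-k)*s)^d - (1-(1-k)*ε)^d)
        + ((d:ℝ)+1) * (1-x) * x^d * (1-k) * ((1-s)^d*(1-(1-k)*ε)^d - (1-ε)^d*(1-(1-k)*s)^d))
       - (((1-k) + (1-(1-k))*x)^(d+1) - x^(d+1)) * ((1-s)^d - (1-ε)^d)) :=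
    mul_nonneg hma (by linarith)
  have hid : Fder d x ε * Gder d x k s - Fder d x s * Gder d x k ε
      = ((d:ℝ)+1)*(1-x)*x^d *
      (((1 - x^(d+1)) * (1-k) * ((1-(1-k)*s)^d - (1-(1-k)*ε)^d)
        + ((d:ℝ)+1) * (1-x) * x^d * (1-k) * ((1-s)^d*(1-(1-k)*ε)^d - (1-ε)^d*(1-(1-k)*s)^d))
       - (((1-k) + (1-(1-k))*x)^(d+1) - x^(d+1)) * ((1-s)^d - (1-ε)^d)) := by
    simp only [Fder, Gder]
    ring
  linarith [hid ▸ h2]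

lemma cont_Fder (d : ℕ) (x : ℝ) : Continuous (Fder d x) := by
  unfold Fder; fun_prop

lemma cont_Gder (d : ℕ) (x k : ℝ) : Continuous (Gder d x k) := by
  unfold Gder; fun_prop

lemma hasDeriv_fpol (d : ℕ) (x : ℝ) (e : ℝ) : HasDerivAt (fpol d x) (Fder d x e) e := by
  have h1 : HasDerivAt (fun t : ℝ => (1-t)^(d+1))
      (((d:ℝ)+1) * (1-e)^d * (-1)) e := by
    have := (((hasDerivAt_id e).const_sub 1)).fun_pow (d+1)
    simpa [Nat.add_sub_cancel] using this
  have h2 : HasDerivAt (fun t : ℝ => (1 - x^(d+1))*t) (1 - x^(d+1)) e := by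
    simpa using (hasDerivAt_id e).const_mul (1 - x^(d+1))
  have h3 := (h1.const_sub 1).const_mul ((1-x)*x^d)
  have h4 := h2.sub h3
  have : HasDerivAt (fpol d x)
      ((1 - x^(d+1)) - (1-x)*x^d * -(((d:ℝ)+1) * (1-e)^d * (-1))) e := h4
  convert this using 1
  unfold Fder; ring

lemma hasDeriv_gpol (d : ℕ) (x k : ℝ) (e : ℝ) : HasDerivAt (gpol d x k) (Gder d x k e) e := by
  have h1 : HasDerivAt (fun t : ℝ => (1-t)^(d+1))
      (((d:ℝ)+1) * (1-e)^d * (-1)) e := by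
    have := (((hasDerivAt_id e).const_sub 1)).fun_pow (d+1)
    simpa [Nat.add_sub_cancel] using this
  have h1' : HasDerivAt (fun t : ℝ => (1-(1-k)*t)^(d+1))
      (((d:ℝ)+1) * (1-(1-k)*e)^d * (-(1-k))) e := by
    have hin : HasDerivAt (fun t : ℝ => 1-(1-k)*t) (-(1-k)) e := by
      simpa using ((hasDerivAt_id e).const_mul (1-k)).const_sub 1
    have := hin.fun_pow (d+1)
    simpa [Nat.add_sub_cancel] using this
  have h2 : HasDerivAt (fun t : ℝ => (1 - (1-k*(1-x))^(d+1))*t) (1 - (1-k*(1-x))^(d+1)) e := by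
    simpa using (hasDerivAt_id e).const_mul (1 - (1-k*(1-x))^(d+1))
  have h3 := (h1'.sub h1).const_mul ((1-x)*x^d)
  have h4 := h2.sub h3
  have : HasDerivAt (gpol d x k)
      ((1 - (1-k*(1-x))^(d+1)) - (1-x)*x^d *
        (((d:ℝ)+1) * (1-(1-k)*e)^d * (-(1-k)) - ((d:ℝ)+1) * (1-e)^d * (-1))) e := h4
  convert this using 1
  unfold Gder; ring

lemma fpol_int (d : ℕ) (x : ℝ) (ε : ℝ) : fpol d x ε = ∫ s in (0:ℝ)..ε, Fder d x s := by
  have h := intervalIntegral.integral_eq_sub_of_hasDerivAt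
      (f := fpol d x) (f' := Fder d x)
      (fun t _ => hasDeriv_fpol d x t) ((cont_Fder d x).intervalIntegrable 0 ε)
  have h0 : fpol d x 0 = 0 := by unfold fpol; norm_num
  rw [h, h0, sub_zero]

lemma gpol_int (d : ℕ) (x k : ℝ) (ε : ℝ) : gpol d x k ε = ∫ s in (0:ℝ)..ε, Gder d x k s := by
  have h := intervalIntegral.integral_eq_sub_of_hasDerivAt
      (f := gpol d x k) (f' := Gder d x k)
      (fun t _ => hasDeriv_gpol d x k t) ((cont_Gder d x k).intervalIntegrable 0 ε)
  have h0 : gpol d x k 0 = 0 := by unfold gpol; norm_num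
  rw [h, h0, sub_zero]

lemma Wnonneg (d : ℕ) (x k ε : ℝ) (hx : 0 < x) (hx1 : x < 1)
    (hk : 0 < k) (hk1 : k < 1) (hε : 0 < ε) (hε1 : ε ≤ 1) :
    0 ≤ Fder d x ε * gpol d x k ε - fpol d x ε * Gder d x k ε := by
  have hint : 0 ≤ ∫ s in (0:ℝ)..ε, (Fder d x ε * Gder d x k s - Fder d x s * Gder d x k ε) := by
    apply intervalIntegral.integral_nonneg hε.le
    intro s hsmem
    exact integrand_nonneg d x k s ε hx hx1 hk hk1 hsmem.1 hsmem.2 hε1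
  have hi1 : (∫ s in (0:ℝ)..ε, (Fder d x ε * Gder d x k s - Fder d x s * Gder d x k ε))
      = Fder d x ε * (∫ s in (0:ℝ)..ε, Gder d x k s)
        - Gder d x k ε * (∫ s in (0:ℝ)..ε, Fder d x s) := by
    rw [intervalIntegral.integral_sub
        (((cont_Gder d x k).intervalIntegrable 0 ε).const_mul _)
        (by
          have : (fun s => Fder d x s * Gder d x k ε)
              = fun s => Gder d x k ε * Fder d x s := by funext s; ring
          rw [this]
          exact ((cont_Fder d x).intervalIntegrable 0 ε).const_mul _)]
    rw [intervalIntegral.integral_const_mul]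
    congr 1
    have : (fun s => Fder d x s * Gder d x k ε)
        = fun s => Gder d x k ε * Fder d x s := by funext s; ring
    rw [this, intervalIntegral.integral_const_mul]
  rw [hi1, ← gpol_int, ← fpol_int] at hint
  linarith

lemma gpol_pos (d : ℕ) (hd : 0 < d) (x k ε : ℝ) (hx : 0 < x) (hx1 : x < 1)
    (hk : 0 < k) (hk1 : k < 1) (hε : 0 < ε) (hε1 : ε < 1) :
    0 < gpol d x k ε := by
  have hN0 : (0:ℝ) ≤ 1-k*(1-x) := by nlinarith
  have hN1 : (1:ℝ)-k*(1-x) ≤ 1 := by nlinarith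
  have hxN : x ≤ 1-k*(1-x) := by nlinarith
  have hA : ((d:ℝ)+1) * (1-k*(1-x))^d * (k*(1-x)) ≤ 1 - (1-k*(1-x))^(d+1) := by
    have := geom_lb d (1-k*(1-x)) hN0 hN1
    calc ((d:ℝ)+1) * (1-k*(1-x))^d * (k*(1-x))
        = ((d:ℝ)+1) * (1-k*(1-x))^d * (1-(1-k*(1-x))) := by ring
      _ ≤ 1 - (1-k*(1-x))^(d+1) := this
  have hB : (1-(1-k)*ε)^(d+1) - (1-ε)^(d+1) ≤ ((d:ℝ)+1)*(k*ε)*(1-(1-k)*ε)^d := by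
    have := pow_sub_pow_le d (1-ε) (1-(1-k)*ε) (by linarith) (by nlinarith)
    calc (1-(1-k)*ε)^(d+1) - (1-ε)^(d+1)
        ≤ ((d:ℝ)+1) * ((1-(1-k)*ε) - (1-ε)) * (1-(1-k)*ε)^d := this
      _ = ((d:ℝ)+1)*(k*ε)*(1-(1-k)*ε)^d := by ring
  have hbase0 : (0:ℝ) < 1-(1-k)*ε := by nlinarith
  have hC : (x*(1-(1-k)*ε))^d < (1-k*(1-x))^d := by
    apply pow_lt_pow_left₀ _ (mul_nonneg hx.le hbase0.le) (by omega)
    nlinarith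
  have c1 : (1-x)*x^d*((1-(1-k)*ε)^(d+1) - (1-ε)^(d+1))
      ≤ (1-x)*x^d*(((d:ℝ)+1)*(k*ε)*(1-(1-k)*ε)^d) :=
    mul_le_mul_of_nonneg_left hB (mul_nonneg (by linarith) (by positivity))
  have c2 : ((d:ℝ)+1) * (1-k*(1-x))^d * (k*(1-x)) * ε ≤ (1 - (1-k*(1-x))^(d+1)) * ε :=
    mul_le_mul_of_nonneg_right hA hε.le
  have c3 : ((d:ℝ)+1)*k*(1-x)*ε*(x*(1-(1-k)*ε))^d < ((d:ℝ)+1)*k*(1-x)*ε*(1-k*(1-x))^d := by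
    apply mul_lt_mul_of_pos_left hC
    have : (0:ℝ) < 1-x := by linarith
    positivity
  have hid : (1-x)*x^d*(((d:ℝ)+1)*(k*ε)*(1-(1-k)*ε)^d)
      = ((d:ℝ)+1)*k*(1-x)*ε*(x*(1-(1-k)*ε))^d := by
    rw [mul_pow]; ring
  unfold gpol
  nlinarith [c1, c2, c3, hid]


/-- In the step-demand monomial model, for fixed `x, k ∈ (0,1)`, the ratio of
the optimal welfare improvement to the welfare improvement of policy `k`,
`ε ↦ (ψ_ε(0) − ψ_ε(1)) / (ψ_ε(0) − ψ_ε(k))`, is monotonically increasing on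
`(0,1)`, where `ψ_ε(k) = t₁(ε)·N₁(k)^{d+1} + (1−t₁(ε))·N₂(ε,k)^{d+1}` with
`t₁(ε) = xε/(1−x(1−ε))`, `N₁(k) = 1−k(1−x)`, `N₂(ε,k) = (1−ε)x + kεx`. -/
theorem stmt10 (d : ℕ) (hd : 0 < d)
    (x k : ℝ) (hx : x ∈ Set.Ioo (0 : ℝ) 1) (hk : k ∈ Set.Ioo (0 : ℝ) 1)
    (t₁ : ℝ → ℝ) (ht₁ : ∀ ε, t₁ ε = x * ε / (1 - x * (1 - ε)))
    (N₁ : ℝ → ℝ) (hN₁ : ∀ k', N₁ k' = 1 - k' * (1 - x))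
    (N₂ : ℝ → ℝ → ℝ) (hN₂ : ∀ ε k', N₂ ε k' = (1 - ε) * x + k' * ε * x)
    (ψ : ℝ → ℝ → ℝ)
    (hψ : ∀ ε k', ψ ε k' = t₁ ε * (N₁ k') ^ (d + 1) + (1 - t₁ ε) * (N₂ ε k') ^ (d + 1)) :
    MonotoneOn (fun ε => (ψ ε 0 - ψ ε 1) / (ψ ε 0 - ψ ε k)) (Set.Ioo 0 1) := by
  obtain ⟨hx0, hx1⟩ := hx
  obtain ⟨hk0, hk1⟩ := hk
  have heq : ∀ ε ∈ Set.Ioo (0:ℝ) 1,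
      (ψ ε 0 - ψ ε 1) / (ψ ε 0 - ψ ε k) = fpol d x ε / gpol d x k ε := by
    intro ε hε
    obtain ⟨hε0, hε1⟩ := hε
    have hD : 0 < 1 - x * (1 - ε) := by nlinarith
    have hnum : ψ ε 0 - ψ ε 1 = (x / (1 - x * (1 - ε))) * fpol d x ε := by
      rw [hψ ε 0, hψ ε 1, ht₁ ε, hN₁ 0, hN₁ 1, hN₂ ε 0, hN₂ ε 1]
      rw [show ((1:ℝ)-ε)*x + 0*ε*x = x*(1-ε) from by ring,
          show ((1:ℝ)-ε)*x + 1*ε*x = x from by ring,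
          show (1:ℝ) - 0*(1-x) = 1 from by ring,
          show (1:ℝ) - 1*(1-x) = x from by ring,
          mul_pow, one_pow]
      unfold fpol
      field_simp
      ring
    have hden : ψ ε 0 - ψ ε k = (x / (1 - x * (1 - ε))) * gpol d x k ε := by
      rw [hψ ε 0, hψ ε k, ht₁ ε, hN₁ 0, hN₁ k, hN₂ ε 0, hN₂ ε k]
      rw [show ((1:ℝ)-ε)*x + 0*ε*x = x*(1-ε) from by ring,
          show ((1:ℝ)-ε)*x + k*ε*x = x*(1-(1-k)*ε) from by ring,
          show (1:ℝ) - 0*(1-x) = 1 from by ring,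
          mul_pow, mul_pow, one_pow]
      unfold gpol
      field_simp
      ring
    rw [hnum, hden, mul_div_mul_left _ _ (ne_of_gt (div_pos hx0 hD))]
  have hg : ∀ ε ∈ Set.Ioo (0:ℝ) 1, 0 < gpol d x k ε :=
    fun ε hε => gpol_pos d hd x k ε hx0 hx1 hk0 hk1 hε.1 hε.2
  have hmono : MonotoneOn (fun e => fpol d x e / gpol d x k e) (Set.Ioo 0 1) := by
    apply monotoneOn_of_deriv_nonneg (convex_Ioo 0 1)
    · exact ContinuousOn.div
        (Continuous.continuousOn (by unfold fpol; fun_prop))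
        (Continuous.continuousOn (by unfold gpol; fun_prop))
        (fun e he => (hg e he).ne')
    · rw [interior_Ioo]
      intro e he
      exact (((hasDeriv_fpol d x e).div (hasDeriv_gpol d x k e)
        (hg e he).ne')).differentiableAt.differentiableWithinAt
    · rw [interior_Ioo]
      intro e he
      have hder := (hasDeriv_fpol d x e).fun_div (hasDeriv_gpol d x k e) (hg e he).ne'
      rw [hder.deriv]
      apply div_nonneg
      · exact Wnonneg d x k e hx0 hx1 hk0 hk1 he.1 he.2.le
      · positivity
  intro a ha b hb hab
  simp only []
  rw [heq a ha, heq b hb]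
  exact hmono ha hb hab
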